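/- arXiv:0803.2504 — 3 statements merged into one kernel-verified Lean document; each statement's English description precedes it below -/
import Mathlib

section
/- Let $p,q$ be coprime positive integers with $p<q$ and let $a$ be a positive integer with $m=(q-p)a$. Then the monoid $M^+ = \{(i,j)\in\mathbb{Z}_{\ge 0}^2 : qj \le pi,\ m \mid (i-j)\}$ is generated by the $ap+1$ elements $(m,0),(m+1,1),(m+2,2),\ldots,(aq,ap)$. -/
/-- The monoid `M^+` as a set of pairs of integers. -/
def Mplus (p q m : ℕ) : Set (ℤ × ℤ) :=
  {v | 0 ≤ v.1 ∧ 0 ≤ v.2 ∧ (q : ℤ) * v.2 ≤ (p : ℤ) * v.1 ∧ (m : ℤ) ∣ (v.1 - v.2)}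

theorem stmt_2 (p q a m : ℕ) (hp : 0 < p) (hq : 0 < q) (ha : 0 < a)
    (hco : Nat.Coprime p q) (hpq : p < q) (hm : m = (q - p) * a) :
    Mplus p q m =
      (AddSubmonoid.closure {v : ℤ × ℤ | ∃ t : ℕ, t ≤ a * p ∧ v = ((m : ℤ) + t, (t : ℤ))} :
        Set (ℤ × ℤ)) := by
  set S : Set (ℤ × ℤ) := {v : ℤ × ℤ | ∃ t : ℕ, t ≤ a * p ∧ v = ((m : ℤ) + t, (t : ℤ))} with hS
  have hm1 : 1 ≤ m := by
    rw [hm]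
    have h1 : 1 ≤ q - p := by omega
    calc 1 = 1 * 1 := by ring
    _ ≤ (q - p) * a := Nat.mul_le_mul h1 ha
  have hmz : (m : ℤ) = (q : ℤ) * a - (p : ℤ) * a := by
    rw [hm]; push_cast [hpq.le]; ring
  apply Set.Subset.antisymm
  · -- Mplus ⊆ closure
    have key : ∀ n : ℕ, ∀ i j : ℤ, i ≤ n → (i, j) ∈ Mplus p q m →
        (i, j) ∈ AddSubmonoid.closure S := by
      intro n
      induction n with
      | zero =>
        intro i j hin hmem
        obtain ⟨h1, h2, h3, h4⟩ := hmem
        simp only at h1 h2 h3 h4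
        have hi : i = 0 := le_antisymm (by exact_mod_cast hin) h1
        have hj : j = 0 := by nlinarith
        rw [hi, hj]
        exact AddSubmonoid.zero_mem _
      | succ n ih =>
        intro i j hin hmem
        by_cases hle : i ≤ n
        · exact ih i j hle hmem
        obtain ⟨h1, h2, h3, h4⟩ := hmem
        simp only at h1 h2 h3 h4
        have hi1 : (1 : ℤ) ≤ i := by
          push_cast at hin; omega
        have hji : j < i := by nlinarith
        by_cases hcase : (a * p : ℤ) ≤ j
        · -- subtract (m + ap, ap) = (aq, ap)
          have hmem' : (i - (a * q : ℤ), j - (a * p : ℤ)) ∈ Mplus p q m := by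
            refine ⟨?_, ?_, ?_, ?_⟩
            · simp only
              push_cast at hcase ⊢
              nlinarith
            · simpa using hcase
            · simp only
              push_cast
              nlinarith
            · simp only
              have : i - (a * q : ℤ) - (j - (a * p : ℤ)) = (i - j) - m := by
                rw [hmz]; push_cast; ring
              rw [this]
              exact dvd_sub h4 dvd_rfl
          have haq1 : (1 : ℤ) ≤ (a * q : ℤ) := by
            have : 1 ≤ a * q := Nat.one_le_iff_ne_zero.mpr (by positivity)
            exact_mod_cast this
          have hrec := ih (i - (a * q : ℤ)) (j - (a * p : ℤ))
            (by push_cast at hin ⊢; omega) hmem'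
          have hgen : ((m : ℤ) + (a * p : ℕ), ((a * p : ℕ) : ℤ)) ∈
              AddSubmonoid.closure S :=
            AddSubmonoid.subset_closure ⟨a * p, le_refl _, rfl⟩
          have hsum : (i, j) = ((m : ℤ) + (a * p : ℕ), ((a * p : ℕ) : ℤ)) +
              (i - (a * q : ℤ), j - (a * p : ℤ)) := by
            rw [Prod.ext_iff]
            constructor
            · simp only [Prod.fst_add]
              push_cast
              rw [hmz]; push_cast; ring
            · simp only [Prod.snd_add]
              push_cast; ring
          rw [hsum]
          exact AddSubmonoid.add_mem _ hgen hrec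
        · -- j < ap : subtract (m + j, j)
          push_neg at hcase
          have hij : m ≤ i - j := Int.le_of_dvd (by omega) h4
          have hmem' : (i - (m : ℤ) - j, (0 : ℤ)) ∈ Mplus p q m := by
            refine ⟨?_, le_refl _, ?_, ?_⟩
            · simp only; omega
            · simp only [mul_zero]
              exact mul_nonneg (by positivity) (by omega)
            · simp only
              have : i - (m : ℤ) - j - 0 = (i - j) - m := by ring
              rw [this]
              exact dvd_sub h4 dvd_rfl
          have hrec := ih (i - (m : ℤ) - j) 0
            (by push_cast at hin ⊢; omega) hmem'
          have hjt : ((j.toNat : ℤ)) = j := Int.toNat_of_nonneg h2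
          have hgen : ((m : ℤ) + (j.toNat : ℤ), (j.toNat : ℤ)) ∈
              AddSubmonoid.closure S := by
            refine AddSubmonoid.subset_closure ⟨j.toNat, ?_, rfl⟩
            have : (j.toNat : ℤ) ≤ (a * p : ℤ) := by rw [hjt]; exact hcase.le
            exact_mod_cast this
          have hsum : (i, j) = ((m : ℤ) + (j.toNat : ℤ), (j.toNat : ℤ)) +
              (i - (m : ℤ) - j, (0 : ℤ)) := by
            rw [Prod.ext_iff]
            constructor
            · simp only [Prod.fst_add]; rw [hjt]; ring
            · simp only [Prod.snd_add]; rw [hjt]; ring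
          rw [hsum]
          exact AddSubmonoid.add_mem _ hgen hrec
    intro v hv
    have h1 := hv.1
    have := key v.1.toNat v.1 v.2 (by omega) (by simpa using hv)
    simpa using this
  · -- closure ⊆ Mplus
    intro v hv
    have hv' : v ∈ AddSubmonoid.closure S := hv
    clear hv
    induction hv' using AddSubmonoid.closure_induction with
    | mem x hx =>
      obtain ⟨t, ht, rfl⟩ := hx
      have htz : (t : ℤ) ≤ (a : ℤ) * p := by exact_mod_cast ht
      refine ⟨by positivity, by positivity, ?_, ?_⟩
      · simp only
        nlinarith [hmz, Int.natCast_pos.mpr hp, Int.natCast_pos.mpr hq,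
          (show (p:ℤ) < q by exact_mod_cast hpq)]
      · simp only
        simp
    | zero => exact ⟨le_refl _, le_refl _, by simp, by simp⟩
    | add x y hx hy ihx ihy =>
      obtain ⟨hx1, hx2, hx3, hx4⟩ := ihx
      obtain ⟨hy1, hy2, hy3, hy4⟩ := ihy
      refine ⟨?_, ?_, ?_, ?_⟩
      · simp only [Prod.fst_add]; linarith
      · simp only [Prod.snd_add]; linarith
      · simp only [Prod.fst_add, Prod.snd_add]; nlinarith
      · simp only [Prod.fst_add, Prod.snd_add]
        have : x.1 + y.1 - (x.2 + y.2) = (x.1 - x.2) + (y.1 - y.2) := by ring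
        rw [this]
        exact dvd_add hx4 hy4
end

section
/- Let $b \ge 1$ be an integer. The polynomial $Y_0^b - X_1X_4 + X_2X_3$ is irreducible in $\mathbb{C}[Y_0,X_1,X_2,X_3,X_4]$. -/
open MvPolynomial

/-- The polynomial `Y₀^b - X₁X₄ + X₂X₃` in `ℂ[Y₀,X₁,X₂,X₃,X₄]`,
with variable `0` playing the role of `Y₀` and variable `i` that of `Xᵢ`. -/
noncomputable def hypersurfacePoly (b : ℕ) : MvPolynomial (Fin 5) ℂ :=
  X 0 ^ b - X 1 * X 4 + X 2 * X 3

lemma irreducible_X3 : Irreducible (X 3 : MvPolynomial (Fin 4) ℂ) := by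
  let e := (renameEquiv ℂ (Equiv.swap (0 : Fin 4) 3)).trans (finSuccEquiv ℂ 3)
  rw [← MulEquiv.irreducible_iff e.toRingEquiv.toMulEquiv]
  have : e.toRingEquiv.toMulEquiv (X 3) = Polynomial.X := by
    simp [e, Equiv.swap_apply_right, finSuccEquiv_X_zero]
  rw [this]
  exact Polynomial.irreducible_X

theorem stmt_4 (b : ℕ) (hb : 1 ≤ b) : Irreducible (hypersurfacePoly b) := by
  classical
  set R := MvPolynomial (Fin 4) ℂ
  let e := (renameEquiv ℂ (Equiv.swap (0 : Fin 5) 1)).trans (finSuccEquiv ℂ 4)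
  rw [← MulEquiv.irreducible_iff e.toRingEquiv.toMulEquiv]
  set q : Polynomial R :=
    Polynomial.C (- X 3) * Polynomial.X + Polynomial.C (X 0 ^ b + X 1 * X 2) with hqdef
  have heq : e.toRingEquiv.toMulEquiv (hypersurfacePoly b) = q := by
    show e (hypersurfacePoly b) = q
    simp only [hypersurfacePoly, map_add, map_sub, map_mul, map_pow, e, AlgEquiv.trans_apply,
      renameEquiv_apply, rename_X]
    rw [show Equiv.swap (0 : Fin 5) 1 0 = Fin.succ 0 from rfl,
      show Equiv.swap (0 : Fin 5) 1 1 = 0 from rfl,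
      show Equiv.swap (0 : Fin 5) 1 2 = Fin.succ 1 from rfl,
      show Equiv.swap (0 : Fin 5) 1 3 = Fin.succ 2 from rfl,
      show Equiv.swap (0 : Fin 5) 1 4 = Fin.succ 3 from rfl,
      finSuccEquiv_X_zero, finSuccEquiv_X_succ, finSuccEquiv_X_succ, finSuccEquiv_X_succ,
      finSuccEquiv_X_succ]
    rw [hqdef]
    simp only [map_add, map_mul, map_pow, map_neg]
    ring
  rw [heq]
  -- the evaluation killing `X 3`
  have hdvd3 : ¬ (X 3 : R) ∣ (X 0 ^ b + X 1 * X 2) := by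
    intro ⟨c, hc⟩
    have := congrArg (eval (fun i : Fin 4 => if i = 3 then 0 else if i = 0 then 0 else 1)) hc
    simp [zero_pow (Nat.one_le_iff_ne_zero.mp hb)] at this
  have hprim : q.IsPrimitive := by
    intro r hr
    rw [Polynomial.C_dvd_iff_dvd_coeff] at hr
    have h1 : r ∣ -X 3 := by
      have := hr 1
      simp only [hqdef, Polynomial.coeff_add, Polynomial.coeff_C_mul, Polynomial.coeff_X_one,
        Polynomial.coeff_C, mul_one] at this
      simpa using this
    have h0 : r ∣ X 0 ^ b + X 1 * X 2 := by
      have := hr 0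
      simp only [hqdef, Polynomial.coeff_add, Polynomial.coeff_C_mul, Polynomial.coeff_X_zero,
        Polynomial.coeff_C, mul_zero, if_pos rfl, zero_add] at this
      exact this
    rw [(dvd_neg : r ∣ -X 3 ↔ _)] at h1
    obtain ⟨s, hs⟩ := h1
    rcases irreducible_X3.isUnit_or_isUnit hs with h | h
    · exact h
    · exfalso
      apply hdvd3
      obtain ⟨u, rfl⟩ := h
      obtain ⟨c, hc⟩ := h0
      refine ⟨↑u⁻¹ * c, ?_⟩
      rw [hc, hs, mul_assoc, ← mul_assoc (u : R), Units.mul_inv, one_mul]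
  refine hprim.irreducible_of_irreducible_map_of_injective
    (φ := algebraMap R (FractionRing R)) (IsFractionRing.injective R (FractionRing R)) ?_
  have hX3 : algebraMap R (FractionRing R) (- X 3) ≠ 0 := by
    rw [Ne, map_eq_zero_iff _ (IsFractionRing.injective R (FractionRing R)), neg_eq_zero]
    exact X_ne_zero 3
  apply Polynomial.irreducible_of_degree_eq_one
  rw [hqdef]
  rw [Polynomial.map_add, Polynomial.map_mul, Polynomial.map_C, Polynomial.map_C,
    Polynomial.map_X]
  exact Polynomial.degree_linear hX3
end

section
/- Let $b \ge 1$ be an integer. The quotient ring $R = \mathbb{C}[Y_0,X_1,X_2,X_3,X_4]/(Y_0^b - X_1X_4 + X_2X_3)$ is a unique factorization domain. -/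
open MvPolynomial

/-- The coordinate ring `R = ℂ[Y₀,X₁,X₂,X₃,X₄]/(Y₀^b - X₁X₄ + X₂X₃)` of `H_b`. -/
noncomputable def hypersurfaceRing (b : ℕ) : Type :=
  MvPolynomial (Fin 5) ℂ ⧸ Ideal.span {hypersurfacePoly b}

noncomputable instance (b : ℕ) : CommRing (hypersurfaceRing b) :=
  Ideal.Quotient.commRing _


section LocUFD

variable {A : Type*} [CommRing A] [IsDomain A] [UniqueFactorizationMonoid A]
variable {M : Submonoid A}
variable {S : Type*} [CommRing S] [Algebra A S] [IsLocalization M S]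

/-- A prime of `A` whose image in the localization is not a unit stays prime. -/
theorem prime_image_of_prime [IsDomain S] (hM : M ≤ nonZeroDivisors A) {p : A} (hp : Prime p)
    (hu : ¬ IsUnit (algebraMap A S p)) : Prime (algebraMap A S p) := by
  have hinj := IsLocalization.injective S hM
  have hpM : ∀ m : M, ¬ p ∣ (m : A) := by
    rintro m ⟨k, hk⟩
    apply hu
    have : IsUnit (algebraMap A S (m : A)) := IsLocalization.map_units S m
    rw [hk, map_mul] at this
    exact isUnit_of_mul_isUnit_left this
  constructor
  · intro h0
    exact hp.ne_zero (hinj (h0.trans (map_zero _).symm))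
  refine ⟨hu, ?_⟩
  intro x y ⟨z, hz⟩
  obtain ⟨⟨a, m⟩, (rfl : IsLocalization.mk' S a m = x)⟩ := IsLocalization.mk'_surjective M x
  obtain ⟨⟨b, n⟩, (rfl : IsLocalization.mk' S b n = y)⟩ := IsLocalization.mk'_surjective M y
  obtain ⟨⟨c, k⟩, (rfl : IsLocalization.mk' S c k = z)⟩ := IsLocalization.mk'_surjective M z
  rw [← IsLocalization.mk'_mul, IsLocalization.mul_mk'_eq_mk'_of_mul] at hz
  obtain ⟨cc, heq⟩ := IsLocalization.eq.mp hz
  have hdvd : p ∣ (cc : A) * ((k : A) * (a * b)) :=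
    ⟨(cc : A) * ((m * n : M) : A) * c, by rw [heq]; ring⟩
  have h1 : p ∣ a * b := by
    rcases hp.dvd_mul.mp hdvd with h | h
    · exact absurd h (hpM cc)
    rcases hp.dvd_mul.mp h with h | h
    · exact absurd h (hpM k)
    · exact h
  rcases hp.dvd_mul.mp h1 with h | h
  · left
    obtain ⟨a', rfl⟩ := h
    exact ⟨IsLocalization.mk' S a' m, (IsLocalization.mul_mk'_eq_mk'_of_mul _ _ _).symm⟩
  · right
    obtain ⟨b', rfl⟩ := h
    exact ⟨IsLocalization.mk' S b' n, (IsLocalization.mul_mk'_eq_mk'_of_mul _ _ _).symm⟩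

theorem ufd_localization [IsDomain S] (hM : M ≤ nonZeroDivisors A) :
    UniqueFactorizationMonoid S := by
  apply UniqueFactorizationMonoid.of_exists_prime_factors
  intro s hs
  obtain ⟨⟨a, m⟩, (rfl : IsLocalization.mk' S a m = s)⟩ := IsLocalization.mk'_surjective M s
  have ha : a ≠ 0 := by
    rintro rfl
    exact hs (IsLocalization.mk'_zero _)
  obtain ⟨f, hf, hfa⟩ := UniqueFactorizationMonoid.exists_prime_factors a ha
  have key : ∀ (f : Multiset A), (∀ b ∈ f, Prime b) →
      ∃ t : Multiset S, (∀ q ∈ t, Prime q) ∧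
        Associated t.prod ((f.map (algebraMap A S)).prod) := by
    intro f
    induction f using Multiset.induction_on with
    | empty => intro _; exact ⟨0, by simp, by simp⟩
    | cons b f ih =>
      intro hbf
      obtain ⟨t, ht, hassoc⟩ := ih (fun x hx => hbf x (Multiset.mem_cons_of_mem hx))
      by_cases hb : IsUnit (algebraMap A S b)
      · refine ⟨t, ht, ?_⟩
        rw [Multiset.map_cons, Multiset.prod_cons]
        exact hassoc.trans (Associated.symm ((associated_isUnit_mul_left_iff hb).mpr
          (Associated.refl _)))
      · refine ⟨(algebraMap A S b) ::ₘ t, ?_, ?_⟩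
        · intro q hq
          rcases Multiset.mem_cons.mp hq with rfl | hq
          · exact prime_image_of_prime hM (hbf b (Multiset.mem_cons_self b f)) hb
          · exact ht q hq
        · rw [Multiset.prod_cons, Multiset.map_cons, Multiset.prod_cons]
          exact hassoc.mul_left _
  obtain ⟨t, ht, hassoc⟩ := key f hf
  refine ⟨t, ht, ?_⟩
  have h1 : Associated ((f.map (algebraMap A S)).prod) (algebraMap A S a) := by
    obtain ⟨u, hu⟩ := hfa
    exact ⟨Units.map (algebraMap A S : A →* S) u, by
      rw [← hu, map_mul, Multiset.prod_hom]; rfl⟩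
  have h2 : Associated (IsLocalization.mk' S a m) (algebraMap A S a) :=
    ⟨(IsLocalization.map_units S m).unit, by
      rw [IsUnit.unit_spec]; exact IsLocalization.mk'_spec S a m⟩
  exact hassoc.trans (h1.trans h2.symm)

end LocUFD


section Nagata

variable {A : Type*} [CommRing A] [IsDomain A]

/-- If `x * p ^ n = a * c` with `p` prime not dividing `a`, then `a ∣ x`. -/
theorem dvd_of_mul_pow_eq {p a : A} (hp : Prime p) (hpa : ¬ p ∣ a) :
    ∀ (n : ℕ) (x c : A), x * p ^ n = a * c → a ∣ x := by
  intro n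
  induction n with
  | zero => intro x c h; rw [pow_zero, mul_one] at h; exact ⟨c, h⟩
  | succ n ih =>
    intro x c h
    have hpc : p ∣ a * c := ⟨x * p ^ n, by rw [← h]; ring⟩
    have hc : p ∣ c := (hp.dvd_mul.mp hpc).resolve_left hpa
    obtain ⟨c', rfl⟩ := hc
    apply ih x c'
    have h2 : x * p ^ n * p = a * c' * p := by rw [pow_succ] at h; linear_combination h
    exact mul_right_cancel₀ hp.ne_zero h2

theorem nagata [WfDvdMonoid A] {p : A} (hp : Prime p) {S : Type*} [CommRing S] [Algebra A S]
    [IsLocalization.Away p S] [IsDomain S] (hS : UniqueFactorizationMonoid S) :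
    UniqueFactorizationMonoid A := by
  set φ := algebraMap A S with hφ
  have hle : Submonoid.powers p ≤ nonZeroDivisors A :=
    powers_le_nonZeroDivisors_of_noZeroDivisors hp.ne_zero
  have hinj : Function.Injective φ := IsLocalization.injective _ hle
  have hpu : IsUnit (φ p) :=
    IsLocalization.map_units S (⟨p, Submonoid.mem_powers p⟩ : Submonoid.powers p)
  -- from `φ a ∣ φ x` with `p ∤ a` deduce `a ∣ x`
  have key0 : ∀ a x : A, ¬ p ∣ a → φ a ∣ φ x → a ∣ x := by
    intro a x hpa ⟨s, hs⟩
    obtain ⟨⟨c, m⟩, (rfl : IsLocalization.mk' S c m = s)⟩ := IsLocalization.mk'_surjective (Submonoid.powers p) s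
    obtain ⟨n, hn⟩ := m.2
    have : φ (x * (m : A)) = φ (a * c) := by
      rw [map_mul, map_mul, hs, mul_assoc]
      congr 1
      rw [mul_comm, IsLocalization.mk'_spec']
    have heq : x * (m : A) = a * c := hinj this
    rw [← hn] at heq
    exact dvd_of_mul_pow_eq hp hpa n x c heq
  -- if p ∤ a and φ a prime then a prime
  have key1 : ∀ a : A, ¬ p ∣ a → Prime (φ a) → Prime a := by
    intro a hpa hfa
    refine ⟨fun h0 => hfa.ne_zero (by rw [h0, map_zero]), fun hu => hfa.not_unit (hu.map _), ?_⟩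
    intro x y hxy
    have : φ a ∣ φ x * φ y := by rw [← map_mul]; exact map_dvd φ hxy
    rcases hfa.dvd_mul.mp this with h | h
    · exact Or.inl (key0 a x hpa h)
    · exact Or.inr (key0 a y hpa h)
  -- every prime of S is associated to the image of a prime of A not divisible by p
  have key2 : ∀ q : S, Prime q → ∃ a : A, ¬ p ∣ a ∧ Prime a ∧ Associated (φ a) q := by
    intro q hq
    obtain ⟨⟨c, m⟩, (rfl : IsLocalization.mk' S c m = q)⟩ := IsLocalization.mk'_surjective (Submonoid.powers p) q
    have hc : c ≠ 0 := by
      rintro rfl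
      exact hq.ne_zero (IsLocalization.mk'_zero _)
    obtain ⟨n, a, hpa, rfl⟩ := WfDvdMonoid.max_power_factor hc hp.irreducible
    have hu1 : IsUnit (IsLocalization.mk' S (1 : A) m) :=
      IsUnit.of_mul_eq_one (φ (m : A)) (by rw [IsLocalization.mk'_spec, map_one])
    have hu2 : IsUnit (φ (p ^ n)) := by rw [map_pow]; exact hpu.pow n
    have hassoc : Associated (φ a) (IsLocalization.mk' S (p ^ n * a) m) := by
      have h1 : IsLocalization.mk' S (p ^ n * a) m
          = φ a * (φ (p ^ n) * IsLocalization.mk' S 1 m) := by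
        rw [← mul_assoc, ← map_mul, IsLocalization.mul_mk'_eq_mk'_of_mul, mul_one, mul_comm a]
      exact ⟨(hu2.mul hu1).unit, by rw [h1, IsUnit.unit_spec]⟩
    exact ⟨a, hpa, key1 a hpa (hassoc.symm.prime hq), hassoc⟩
  -- transfer associatedness back
  have key3 : ∀ c d : A, ¬ p ∣ c → ¬ p ∣ d → Associated (φ c) (φ d) → Associated c d := by
    intro c d hc hd h
    exact associated_of_dvd_dvd (key0 c d hc h.dvd) (key0 d c hd h.symm.dvd)
  -- main argument
  apply UniqueFactorizationMonoid.of_exists_prime_factors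
  intro x hx
  obtain ⟨n, x', hpx', rfl⟩ := WfDvdMonoid.max_power_factor hx hp.irreducible
  have hx' : x' ≠ 0 := fun h => hx (by rw [h, mul_zero])
  have hfx' : φ x' ≠ 0 := fun h => hx' (hinj (h.trans (map_zero _).symm))
  obtain ⟨f, hf, hfa⟩ := UniqueFactorizationMonoid.exists_prime_factors (φ x') hfx'
  have key4 : ∀ (f : Multiset S), (∀ q ∈ f, Prime q) →
      ∃ t : Multiset A, (∀ a ∈ t, Prime a ∧ ¬ p ∣ a) ∧ Associated (φ t.prod) f.prod := by
    intro f
    induction f using Multiset.induction_on with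
    | empty => intro _; exact ⟨0, by simp, by simp⟩
    | cons q f ih =>
      intro hqf
      obtain ⟨t, ht, hassoc⟩ := ih (fun r hr => hqf r (Multiset.mem_cons_of_mem hr))
      obtain ⟨a, hpa, hap, haq⟩ := key2 q (hqf q (Multiset.mem_cons_self q f))
      refine ⟨a ::ₘ t, ?_, ?_⟩
      · intro b hb
        rcases Multiset.mem_cons.mp hb with rfl | hb
        · exact ⟨hap, hpa⟩
        · exact ht b hb
      · rw [Multiset.prod_cons, Multiset.prod_cons, map_mul]
        exact haq.mul_mul hassoc
  obtain ⟨t, ht, hassoc⟩ := key4 f hf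
  have h5 : Associated (φ t.prod) (φ x') := hassoc.trans hfa
  have hptp : ¬ p ∣ t.prod := by
    intro h
    obtain ⟨a, ha, hpa⟩ := hp.exists_mem_multiset_dvd h
    exact (ht a ha).2 hpa
  have h6 : Associated t.prod x' := key3 _ _ hptp hpx' h5
  refine ⟨Multiset.replicate n p + t, ?_, ?_⟩
  · intro b hb
    rcases Multiset.mem_add.mp hb with hb | hb
    · rw [Multiset.eq_of_mem_replicate hb]; exact hp
    · exact (ht b hb).1
  · rw [Multiset.prod_add, Multiset.prod_replicate]
    exact (h6.mul_left (p ^ n))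

end Nagata



-- linear polynomial with prime leading coefficient not dividing constant is prime
theorem prime_linear {A : Type*} [CommRing A] [IsDomain A] [UniqueFactorizationMonoid A]
    {a c : A} (ha : Prime a) (hc : ¬ a ∣ c) :
    Prime (Polynomial.C a * Polynomial.X + Polynomial.C c) := by
  rw [← UniqueFactorizationMonoid.irreducible_iff_prime]
  set F := Polynomial.C a * Polynomial.X + Polynomial.C c with hF
  have hdeg : F.natDegree = 1 := Polynomial.natDegree_linear ha.ne_zero
  have hF0 : F ≠ 0 := fun h => by simp [h] at hdeg
  constructor
  · intro h
    have := Polynomial.natDegree_eq_zero_of_isUnit h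
    omega
  · intro G H hGH
    have hG0 : G ≠ 0 := fun h => hF0 (by rw [hGH, h, zero_mul])
    have hH0 : H ≠ 0 := fun h => hF0 (by rw [hGH, h, mul_zero])
    have hsum : G.natDegree + H.natDegree = 1 := by
      rw [← Polynomial.natDegree_mul hG0 hH0, ← hGH, hdeg]
    -- helper to handle the degree-0 factor
    have main : ∀ G H : Polynomial A, F = G * H → G.natDegree = 0 → IsUnit G := by
      intro G H hGH hdG
      obtain ⟨d, rfl⟩ := Polynomial.natDegree_eq_zero.mp hdG
      have hda : d ∣ a := by
        have := congrArg (fun q => Polynomial.coeff q 1) hGH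
        simp only [Polynomial.coeff_C_mul] at this
        refine ⟨H.coeff 1, ?_⟩
        simpa [hF] using this
      have hdc : d ∣ c := by
        have := congrArg (fun q => Polynomial.coeff q 0) hGH
        simp only [Polynomial.coeff_C_mul] at this
        refine ⟨H.coeff 0, ?_⟩
        simpa [hF] using this
      rw [Polynomial.isUnit_C]
      obtain ⟨e, rfl⟩ := hda
      rcases ha.irreducible.isUnit_or_isUnit rfl with h | h
      · exact h
      · exfalso
        apply hc
        exact (h.mul_right_dvd).mpr hdc
    rcases Nat.add_eq_one_iff.mp hsum with ⟨h1, h2⟩ | ⟨h1, h2⟩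
    · exact Or.inl (main G H hGH h1)
    · exact Or.inr (main H G (by rw [hGH, mul_comm]) h2)

-- X i is prime in MvPolynomial (Fin (n+1)) over a field (or domain)
theorem prime_mv_X {K : Type*} [Field K] {n : ℕ} (i : Fin (n + 1)) :
    Prime (X i : MvPolynomial (Fin (n + 1)) K) := by
  rw [← MulEquiv.prime_iff ((renameEquiv K (Equiv.swap (0 : Fin (n + 1)) i)).trans
    (finSuccEquiv K n)).toMulEquiv]
  have : ((renameEquiv K (Equiv.swap (0 : Fin (n + 1)) i)).trans
      (finSuccEquiv K n)).toMulEquiv (X i) = Polynomial.X := by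
    show (finSuccEquiv K n) ((renameEquiv K (Equiv.swap (0 : Fin (n + 1)) i)) (X i)) = _
    rw [renameEquiv_apply, rename_X, Equiv.swap_apply_right, finSuccEquiv_X_zero]
  rw [this]
  exact Polynomial.prime_X

-- not-dvd via evaluation
theorem not_dvd_of_eval {n : ℕ} {a c : MvPolynomial (Fin n) ℂ} (v : Fin n → ℂ)
    (ha : eval v a = 0) (hc : eval v c ≠ 0) : ¬ a ∣ c := by
  rintro ⟨k, rfl⟩
  rw [map_mul, ha, zero_mul] at hc
  exact hc rfl

theorem prime_hypersurfacePoly (b : ℕ) (hb : 1 ≤ b) : Prime (hypersurfacePoly b) := by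
  rw [← MulEquiv.prime_iff ((renameEquiv ℂ (Equiv.swap (0 : Fin 5) 4)).trans
    (finSuccEquiv ℂ 4)).toMulEquiv]
  have key : ((renameEquiv ℂ (Equiv.swap (0 : Fin 5) 4)).trans
      (finSuccEquiv ℂ 4)).toMulEquiv (hypersurfacePoly b)
      = Polynomial.C (-(X 0) : MvPolynomial (Fin 4) ℂ) * Polynomial.X
        + Polynomial.C (X 1 * X 2 + X 3 ^ b) := by
    show (finSuccEquiv ℂ 4) ((renameEquiv ℂ (Equiv.swap (0 : Fin 5) 4)) (hypersurfacePoly b)) = _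
    rw [renameEquiv_apply]
    unfold hypersurfacePoly
    have h1 : (1 : Fin 5) = Fin.succ 0 := rfl
    have h2 : (2 : Fin 5) = Fin.succ 1 := rfl
    have h3 : (3 : Fin 5) = Fin.succ 2 := rfl
    have h4 : (4 : Fin 5) = Fin.succ 3 := rfl
    rw [map_add, map_sub, map_pow, map_mul, map_mul, rename_X, rename_X, rename_X, rename_X,
      rename_X, Equiv.swap_apply_left, Equiv.swap_apply_right]
    rw [show Equiv.swap (0 : Fin 5) 4 1 = Fin.succ 0 by decide,
      show Equiv.swap (0 : Fin 5) 4 2 = Fin.succ 1 by decide,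
      show Equiv.swap (0 : Fin 5) 4 3 = Fin.succ 2 by decide,
      show (4 : Fin 5) = Fin.succ 3 from rfl]
    rw [map_add, map_sub, map_pow, map_mul, map_mul, finSuccEquiv_X_zero,
      finSuccEquiv_X_succ, finSuccEquiv_X_succ, finSuccEquiv_X_succ, finSuccEquiv_X_succ]
    rw [← Polynomial.C_pow, ← Polynomial.C_mul, Polynomial.C_add, Polynomial.C_neg]
    ring
  rw [key]
  apply prime_linear
  · exact (prime_mv_X (0 : Fin 4)).neg
  · apply not_dvd_of_eval (fun i => if i = 3 then 1 else 0) <;> simp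

set_option maxHeartbeats 1000000 in
theorem prime_g (b : ℕ) (hb : 1 ≤ b) :
    Prime ((X 0 ^ b + X 2 * X 3 : MvPolynomial (Fin 5) ℂ)) := by
  rw [← MulEquiv.prime_iff ((renameEquiv ℂ (Equiv.swap (0 : Fin 5) 3)).trans
    (finSuccEquiv ℂ 4)).toMulEquiv]
  have key : ((renameEquiv ℂ (Equiv.swap (0 : Fin 5) 3)).trans
      (finSuccEquiv ℂ 4)).toMulEquiv ((X 0 ^ b + X 2 * X 3 : MvPolynomial (Fin 5) ℂ))
      = Polynomial.C (X 1 : MvPolynomial (Fin 4) ℂ) * Polynomial.X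
        + Polynomial.C (X 2 ^ b) := by
    show (finSuccEquiv ℂ 4) ((renameEquiv ℂ (Equiv.swap (0 : Fin 5) 3))
      ((X 0 ^ b + X 2 * X 3 : MvPolynomial (Fin 5) ℂ))) = _
    rw [renameEquiv_apply]
    rw [map_add, map_pow, map_mul, rename_X, rename_X, rename_X,
      Equiv.swap_apply_left, Equiv.swap_apply_right]
    rw [show Equiv.swap (0 : Fin 5) 3 2 = Fin.succ 1 by decide,
      show (3 : Fin 5) = Fin.succ 2 from rfl]
    rw [map_add, map_pow, map_mul, finSuccEquiv_X_zero, finSuccEquiv_X_succ, finSuccEquiv_X_succ]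
    rw [← Polynomial.C_pow]
    ring
  rw [key]
  apply prime_linear
  · exact prime_mv_X (1 : Fin 4)
  · apply not_dvd_of_eval (fun i => if i = 2 then 1 else 0) <;> simp




-- substitution киlling X 1
noncomputable def Phi : MvPolynomial (Fin 5) ℂ →ₐ[ℂ] MvPolynomial (Fin 5) ℂ :=
  aeval (fun i => if i = 1 then 0 else X i)

theorem Phi_X1 : Phi (X 1) = 0 := by simp [Phi]

theorem Phi_f (b : ℕ) : Phi (hypersurfacePoly b) = X 0 ^ b + X 2 * X 3 := by
  simp [Phi, hypersurfacePoly]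

theorem sub_Phi_dvd (x : MvPolynomial (Fin 5) ℂ) : X 1 ∣ x - Phi x := by
  induction x using MvPolynomial.induction_on with
  | C a => simp [Phi]
  | add x y hx hy =>
    have : x + y - Phi (x + y) = (x - Phi x) + (y - Phi y) := by rw [map_add]; ring
    rw [this]
    exact dvd_add hx hy
  | mul_X x i hx =>
    by_cases hi : i = 1
    · subst hi
      rw [map_mul, Phi_X1, mul_zero, sub_zero]
      exact Dvd.intro_left x rfl
    · have : x * X i - Phi (x * X i) = (x - Phi x) * X i := by
        rw [map_mul, show Phi (X i) = X i by simp [Phi, hi]]; ring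
      rw [this]
      exact hx.mul_right _

theorem sub_Phi_mem (x : MvPolynomial (Fin 5) ℂ) : ∃ v, x = Phi x + X 1 * v := by
  obtain ⟨v, hv⟩ := sub_Phi_dvd x
  exact ⟨v, by linear_combination hv⟩

theorem J_isPrime (b : ℕ) (hb : 1 ≤ b) :
    (Ideal.span {hypersurfacePoly b, X 1} : Ideal (MvPolynomial (Fin 5) ℂ)).IsPrime := by
  set g : MvPolynomial (Fin 5) ℂ := X 0 ^ b + X 2 * X 3 with hg
  have hgp := prime_g b hb
  constructor
  · intro h
    have h1 : (1 : MvPolynomial (Fin 5) ℂ) ∈ Ideal.span {hypersurfacePoly b, X 1} := h ▸ trivial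
    obtain ⟨u, v, huv⟩ := Ideal.mem_span_pair.mp h1
    have := congrArg Phi huv
    rw [map_add, map_mul, map_mul, Phi_X1, mul_zero, add_zero, map_one, Phi_f] at this
    exact hgp.not_unit (IsUnit.of_mul_eq_one _ (by rw [mul_comm]; exact this))
  · intro x y hxy
    obtain ⟨u, v, huv⟩ := Ideal.mem_span_pair.mp hxy
    have hPhi := congrArg Phi huv
    rw [map_add, map_mul, map_mul, Phi_X1, mul_zero, add_zero, map_mul, Phi_f] at hPhi
    have hdvd : g ∣ Phi x * Phi y := ⟨Phi u, by rw [← hPhi]; ring⟩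
    have main : ∀ z : MvPolynomial (Fin 5) ℂ, g ∣ Phi z →
        z ∈ Ideal.span {hypersurfacePoly b, X 1} := by
      intro z ⟨w, hw⟩
      obtain ⟨t, ht⟩ := sub_Phi_mem z
      rw [Ideal.mem_span_pair]
      refine ⟨w, X 4 * w + t, ?_⟩
      rw [ht, hw]
      unfold g
      unfold hypersurfacePoly
      ring
    rcases hgp.dvd_mul.mp hdvd with h | h
    · exact Or.inl (main x h)
    · exact Or.inr (main y h)

theorem prime_p (b : ℕ) (hb : 1 ≤ b) :
    Prime (Ideal.Quotient.mk (Ideal.span {hypersurfacePoly b}) (X 1)) := by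
  set f := hypersurfacePoly b with hf
  have hfp := prime_hypersurfacePoly b hb
  have hgp := prime_g b hb
  have hX1 : Prime (X 1 : MvPolynomial (Fin 5) ℂ) := prime_mv_X 1
  have hne : Ideal.Quotient.mk (Ideal.span {f}) (X 1) ≠ 0 := by
    intro h
    rw [Ideal.Quotient.eq_zero_iff_mem, Ideal.mem_span_singleton] at h
    obtain ⟨k, hk⟩ := h
    rcases hX1.irreducible.isUnit_or_isUnit hk with h | h
    · exact hfp.not_unit h
    · have h2 := congrArg Phi hk
      rw [Phi_X1, map_mul, Phi_f] at h2
      rcases mul_eq_zero.mp h2.symm with h3 | h3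
      · exact hgp.ne_zero h3
      · exact (h.map Phi).ne_zero h3
  rw [← Ideal.span_singleton_prime hne]
  have hmap : Ideal.map (Ideal.Quotient.mk (Ideal.span {f}))
      (Ideal.span {f, X 1}) = Ideal.span {Ideal.Quotient.mk (Ideal.span {f}) (X 1)} := by
    rw [Ideal.map_span, Set.image_insert_eq, Set.image_singleton]
    rw [show Ideal.Quotient.mk (Ideal.span {f}) f = 0 by
      rw [Ideal.Quotient.eq_zero_iff_mem]; exact Ideal.subset_span rfl]
    exact Submodule.span_insert_eq_span (Submodule.zero_mem _)
  rw [← hmap]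
  haveI := J_isPrime b hb
  apply Ideal.map_isPrime_of_surjective Ideal.Quotient.mk_surjective
  rw [Ideal.mk_ker]
  exact Ideal.span_mono (Set.singleton_subset_iff.mpr (Set.mem_insert _ _))




section Main

variable (b : ℕ)

local notation "P5" => MvPolynomial (Fin 5) ℂ
local notation "P4" => MvPolynomial (Fin 4) ℂ

set_option maxHeartbeats 4000000 in
set_option synthInstance.maxHeartbeats 400000 in
theorem main_ufd (b : ℕ) (hb : 1 ≤ b) :
    ∃ h : IsDomain (MvPolynomial (Fin 5) ℂ ⧸ Ideal.span {hypersurfacePoly b}),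
      @UniqueFactorizationMonoid (MvPolynomial (Fin 5) ℂ ⧸ Ideal.span {hypersurfacePoly b})
        (inferInstance : CommMonoidWithZero (MvPolynomial (Fin 5) ℂ ⧸ Ideal.span {hypersurfacePoly b})) := by
  have hfp := prime_hypersurfacePoly b hb
  haveI hIP : (Ideal.span {hypersurfacePoly b}).IsPrime :=
    (Ideal.span_singleton_prime hfp.ne_zero).mpr hfp
  haveI hdom : IsDomain (P5 ⧸ Ideal.span {hypersurfacePoly b}) := Ideal.Quotient.isDomain _
  refine ⟨hdom, ?_⟩
  set πh : P5 →+* (P5 ⧸ Ideal.span {hypersurfacePoly b}) :=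
    Ideal.Quotient.mk (Ideal.span {hypersurfacePoly b}) with hπ
  set p : P5 ⧸ Ideal.span {hypersurfacePoly b} := πh (X 1) with hpdef
  have hp : Prime p := prime_p b hb
  haveI : WfDvdMonoid (P5 ⧸ Ideal.span {hypersurfacePoly b}) := IsNoetherianRing.wfDvdMonoid
  haveI hSdom : IsDomain (Localization.Away p) :=
    IsLocalization.isDomain_localization (powers_le_nonZeroDivisors_of_noZeroDivisors hp.ne_zero)
  haveI hBdom : IsDomain (Localization.Away (X 1 : P4)) :=
    IsLocalization.isDomain_localization
      (powers_le_nonZeroDivisors_of_noZeroDivisors (X_ne_zero 1))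
  have hBufd : UniqueFactorizationMonoid (Localization.Away (X 1 : P4)) :=
    ufd_localization (M := Submonoid.powers (X 1 : P4)) (S := Localization.Away (X 1 : P4))
      (powers_le_nonZeroDivisors_of_noZeroDivisors (X_ne_zero 1))
  set ι : (P5 ⧸ Ideal.span {hypersurfacePoly b}) →+* Localization.Away p :=
    algebraMap _ (Localization.Away p) with hι
  set φB : P4 →+* Localization.Away (X 1 : P4) :=
    algebraMap P4 (Localization.Away (X 1 : P4)) with hφB
  set c4 : P4 := X 0 ^ b + X 2 * X 3 with hc4
  set iv : Localization.Away (X 1 : P4) := IsLocalization.Away.invSelf (X 1 : P4) with hiv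
  have hqi : φB (X 1) * iv = 1 := IsLocalization.Away.mul_invSelf (X 1 : P4)
  set v : Fin 5 → Localization.Away (X 1 : P4) :=
    ![φB (X 0), φB (X 1), φB (X 2), φB (X 3), φB c4 * iv] with hv
  set α : P5 →+* Localization.Away (X 1 : P4) := eval₂Hom (φB.comp (C : ℂ →+* P4)) v with hα
  have h0 : v 0 = φB (X 0) := rfl
  have h1 : v 1 = φB (X 1) := rfl
  have h2 : v 2 = φB (X 2) := rfl
  have h3 : v 3 = φB (X 3) := rfl
  have h4 : v 4 = φB c4 * iv := rfl
  have hαf : α (hypersurfacePoly b) = 0 := by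
    unfold hypersurfacePoly
    rw [map_add, map_sub, map_pow, map_mul, map_mul, hα, eval₂Hom_X', eval₂Hom_X', eval₂Hom_X',
      eval₂Hom_X', eval₂Hom_X', h0, h1, h2, h3, h4, hc4, map_add, map_pow, map_mul]
    linear_combination (-(φB (X 0) ^ b + φB (X 2) * φB (X 3))) * hqi
  have hα0 : ∀ a ∈ Ideal.span {hypersurfacePoly b}, α a = 0 := by
    intro a ha
    obtain ⟨k, rfl⟩ := Ideal.mem_span_singleton.mp ha
    rw [map_mul, hαf, zero_mul]
  set αbar : (P5 ⧸ Ideal.span {hypersurfacePoly b}) →+* Localization.Away (X 1 : P4) :=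
    Ideal.Quotient.lift (Ideal.span {hypersurfacePoly b}) α hα0 with hαbar
  have hαbar_eq : ∀ x : P5, αbar (πh x) = α x := fun x => Ideal.Quotient.lift_mk _ _ _
  have hαp : IsUnit (αbar p) := by
    rw [hpdef, hαbar_eq, hα, eval₂Hom_X', h1]
    exact IsLocalization.map_units (M := Submonoid.powers (X 1 : P4))
      (Localization.Away (X 1 : P4)) (⟨X 1, Submonoid.mem_powers _⟩ : Submonoid.powers (X 1 : P4))
  set Sα : Localization.Away p →+* Localization.Away (X 1 : P4) :=
    IsLocalization.Away.lift (S := Localization.Away p) p hαp with hSα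
  have hSα_eq : ∀ r, Sα (ι r) = αbar r := fun r => IsLocalization.Away.lift_eq p hαp r
  set w : Fin 4 → Localization.Away p := fun i => ι (πh (X i.castSucc)) with hw
  set β : P4 →+* Localization.Away p :=
    eval₂Hom (ι.comp (πh.comp (C : ℂ →+* P5))) w with hβ
  have hβq : IsUnit (β (X 1)) := by
    rw [hβ, eval₂Hom_X']
    show IsUnit (ι p)
    exact IsLocalization.map_units (M := Submonoid.powers p)
      (Localization.Away p) (⟨p, Submonoid.mem_powers _⟩ : Submonoid.powers p)
  set Bβ : Localization.Away (X 1 : P4) →+* Localization.Away p :=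
    IsLocalization.Away.lift (S := Localization.Away (X 1 : P4)) (X 1 : P4) hβq with hBβ
  have hBβ_eq : ∀ x : P4, Bβ (φB x) = β x :=
    fun x => IsLocalization.Away.lift_eq (X 1 : P4) hβq x
  have hup : IsUnit (ι p) :=
    IsLocalization.map_units (M := Submonoid.powers p)
      (Localization.Away p) (⟨p, Submonoid.mem_powers _⟩ : Submonoid.powers p)
  have key1 : (((Bβ.comp Sα)).comp ι).comp πh = (((RingHom.id _)).comp ι).comp πh := by
    apply MvPolynomial.ringHom_ext
    · intro a
      show Bβ (Sα (ι (πh (C a)))) = ι (πh (C a))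
      rw [hSα_eq, hαbar_eq, hα, eval₂Hom_C, RingHom.comp_apply, hBβ_eq, hβ, eval₂Hom_C]
      rfl
    · intro i
      show Bβ (Sα (ι (πh (X i)))) = ι (πh (X i))
      rw [hSα_eq, hαbar_eq, hα, eval₂Hom_X']
      fin_cases i
      · show Bβ (v 0) = ι (πh (X 0))
        rw [h0, hBβ_eq, hβ, eval₂Hom_X']; rfl
      · show Bβ (v 1) = ι (πh (X 1))
        rw [h1, hBβ_eq, hβ, eval₂Hom_X']; rfl
      · show Bβ (v 2) = ι (πh (X 2))
        rw [h2, hBβ_eq, hβ, eval₂Hom_X']; rfl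
      · show Bβ (v 3) = ι (πh (X 3))
        rw [h3, hBβ_eq, hβ, eval₂Hom_X']; rfl
      · show Bβ (v 4) = ι (πh (X 4))
        rw [h4, map_mul, hBβ_eq]
        have hβc4 : β c4 = ι (πh (X 0 ^ b + X 2 * X 3)) := by
          rw [hc4, hβ, map_add, map_pow, map_mul, eval₂Hom_X', eval₂Hom_X', eval₂Hom_X', hw]
          rw [map_add, map_pow, map_mul, map_add, map_pow, map_mul]
          rfl
        have hiv2 : ι p * Bβ iv = 1 := by
          have hc := congrArg Bβ hqi
          rw [map_mul, map_one, hBβ_eq, hβ, eval₂Hom_X'] at hc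
          exact hc
        apply hup.mul_left_cancel
        calc ι p * (β c4 * Bβ iv) = β c4 * (ι p * Bβ iv) := by ring
          _ = β c4 := by rw [hiv2, mul_one]
          _ = ι (πh (X 0 ^ b + X 2 * X 3)) := hβc4
          _ = ι p * ι (πh (X 4)) := by
              show ι (πh (X 0 ^ b + X 2 * X 3)) = ι (πh (X 1)) * ι (πh (X 4))
              rw [← map_mul, ← map_mul]
              refine congrArg ι ?_
              rw [hπ, Ideal.Quotient.eq]
              refine Ideal.mem_span_singleton.mpr ⟨1, ?_⟩
              unfold hypersurfacePoly; ring
  have hcomp1 : Bβ.comp Sα = RingHom.id (Localization.Away p) :=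
    IsLocalization.ringHom_ext (S := Localization.Away p) (Submonoid.powers p)
      (j := Bβ.comp Sα) (k := RingHom.id _)
      ((RingHom.cancel_right (Ideal.Quotient.mk_surjective
        (I := Ideal.span {hypersurfacePoly b}))).mp key1)
  have key2 : ((Sα.comp Bβ)).comp φB = ((RingHom.id _)).comp φB := by
    apply MvPolynomial.ringHom_ext
    · intro a
      show Sα (Bβ (φB (C a))) = φB (C a)
      rw [hBβ_eq, hβ, eval₂Hom_C]
      show Sα (ι (πh (C a))) = φB (C a)
      rw [hSα_eq, hαbar_eq, hα, eval₂Hom_C]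
      rfl
    · intro j
      show Sα (Bβ (φB (X j))) = φB (X j)
      rw [hBβ_eq, hβ, eval₂Hom_X', hw]
      show Sα (ι (πh (X j.castSucc))) = φB (X j)
      rw [hSα_eq, hαbar_eq, hα, eval₂Hom_X']
      fin_cases j
      · exact h0
      · exact h1
      · exact h2
      · exact h3
  have hcomp2 : Sα.comp Bβ = RingHom.id (Localization.Away (X 1 : P4)) :=
    IsLocalization.ringHom_ext (S := Localization.Away (X 1 : P4)) (Submonoid.powers (X 1 : P4))
      (j := Sα.comp Bβ) (k := RingHom.id _) key2
  have hSufd : UniqueFactorizationMonoid (Localization.Away p) :=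
    (RingEquiv.ofRingHom Bβ Sα hcomp1 hcomp2).toMulEquiv.uniqueFactorizationMonoid hBufd
  exact nagata hp hSufd

end Main

theorem stmt_5 (b : ℕ) (hb : 1 ≤ b) :
    ∃ h : IsDomain (hypersurfaceRing b),
      @UniqueFactorizationMonoid (hypersurfaceRing b)
        (inferInstance : CommMonoidWithZero (hypersurfaceRing b)) := by
  exact main_ufd b hb
end
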